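/- There exist universal constants c₀ ≥ 0 and C ≥ 1 with the following property. Let A be an m×n matrix with entries in [0,1] whose maximum column sum Δ₁ satisfies Δ₁ ≥ e, let x ∈ ℝ_{≥0}^n satisfy Ax ≥ 1 componentwise, set α = ln Δ₁ + ln ln Δ₁ + c₀, and let z be the randomized rounding of x at scale α. Fix i ∈ [m] and let θ ∈ (0,1] satisfy both ∑_{j : A_{i,j} ≥ θ} A_{i,j} x_j ≥ 1/2 and ∑_{j : A_{i,j} ≤ θ} A_{i,j} x_j ≥ 1/2. Then P[(Az)_i < 1] ≤ C·θ/Δ₁. -/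

import Mathlib

open MeasureTheory ProbabilityTheory

private lemma chord_aux {s A θ : ℝ} (hθ : 0 < θ) (hA0 : 0 ≤ A) (hAθ : A ≤ θ) :
    (A / θ) * (1 - Real.exp (-(s * θ))) ≤ 1 - Real.exp (-(s * A)) := by
  have hb0 : 0 ≤ A / θ := div_nonneg hA0 hθ.le
  have hb1 : A / θ ≤ 1 := (div_le_one hθ).2 hAθ
  have key := convexOn_exp.2 (Set.mem_univ (0:ℝ)) (Set.mem_univ (-(s*θ)))
      (by linarith : (0:ℝ) ≤ 1 - A/θ) hb0 (by ring)
  simp only [smul_eq_mul, mul_zero, zero_add, Real.exp_zero, mul_one] at key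
  have hAt : A / θ * -(s * θ) = -(s * A) := by field_simp
  rw [hAt] at key
  nlinarith [key]

set_option maxHeartbeats 1000000 in
/-- the failure probability of a constraint is at most
`C·θ_i/Δ₁` for the ℓ1-sparse choice of α (Lemma `concentration`). -/
theorem stmt_14 :
    ∃ c₀ C : ℝ, 0 ≤ c₀ ∧ 1 ≤ C ∧
      ∀ (m n : ℕ) (A : Fin m → Fin n → ℝ) (x : Fin n → ℝ) (Δ₁ α : ℝ)
        (Ω : Type) (_ : MeasurableSpace Ω) (P : Measure Ω),
        IsProbabilityMeasure P →
        ∀ (Y : Fin n → Ω → ℕ) (z : Ω → Fin n → ℕ),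
        (∀ i j, A i j ∈ Set.Icc (0 : ℝ) 1) →
        (∀ j, 0 ≤ x j) →
        (∀ i, 1 ≤ ∑ j, A i j * x j) →
        IsGreatest (Set.range fun j : Fin n => ∑ i, A i j) Δ₁ →
        Real.exp 1 ≤ Δ₁ →
        α = Real.log Δ₁ + Real.log (Real.log Δ₁) + c₀ →
        (∀ j, Measurable (Y j)) →
        (∀ j ω, Y j ω ≤ 1) →
        iIndepFun Y P →
        (∀ j, P {ω | Y j ω = 1} = ENNReal.ofReal (α * x j - (⌊α * x j⌋₊ : ℝ))) →
        (∀ ω j, z ω j = ⌊α * x j⌋₊ + Y j ω) →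
        ∀ (i : Fin m) (θ : ℝ), θ ∈ Set.Ioc (0 : ℝ) 1 →
        (1 / 2 ≤ ∑ j ∈ Finset.univ.filter (fun j => θ ≤ A i j), A i j * x j) →
        (1 / 2 ≤ ∑ j ∈ Finset.univ.filter (fun j => A i j ≤ θ), A i j * x j) →
        P {ω | ∑ j, A i j * (z ω j : ℝ) < 1} ≤ ENNReal.ofReal (C * θ / Δ₁) := by
  classical
  refine ⟨10, 1, by norm_num, le_refl 1, ?_⟩
  intro m n A x Δ₁ α Ω mΩ P hP Y z hA hx hAx hΔgr hΔe hα hYm hY1 hYi hYp hz i θ hθmem hH hLt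
  obtain ⟨hθ0, hθ1⟩ := hθmem
  -- basic numeric facts
  have hΔpos : 0 < Δ₁ := lt_of_lt_of_le (Real.exp_pos 1) hΔe
  have hL1 : 1 ≤ Real.log Δ₁ := by
    have := Real.log_le_log (Real.exp_pos 1) hΔe
    rwa [Real.log_exp] at this
  set L := Real.log Δ₁ with hLdef
  have hLL0 : 0 ≤ Real.log L := Real.log_nonneg hL1
  have hLLle : Real.log L ≤ L - 1 := Real.log_le_sub_one_of_pos (by linarith)
  have hα11 : 11 ≤ α := by rw [hα]; linarith
  have hαpos : 0 < α := by linarith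
  have hlogα_pos : 0 < Real.log α := Real.log_pos (by linarith)
  have hlogα_le : Real.log α ≤ Real.log L + 2.8 := by
    have h16 : α ≤ 16 * L := by rw [hα]; linarith
    have h2 : Real.log α ≤ Real.log (16 * L) := Real.log_le_log hαpos h16
    have h3 : Real.log (16 * L) = Real.log 16 + Real.log L :=
      Real.log_mul (by norm_num) (by linarith)
    have h4 : Real.log 16 = 4 * Real.log 2 := by
      rw [show (16:ℝ) = 2^(4:ℕ) by norm_num, Real.log_pow]; push_cast; ring
    have h5 := Real.log_two_lt_d9
    linarith
  -- parameters
  set s : ℝ := Real.log α / θ with hsdef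
  set t : ℝ := -s with htdef
  have hs0 : 0 < s := div_pos hlogα_pos hθ0
  have ht0 : t ≤ 0 := by rw [htdef]; linarith
  have hsθ : s * θ = Real.log α := div_mul_cancel₀ _ hθ0.ne'
  set q : ℝ := 1 - Real.exp (-(s * θ)) with hqdef
  set Q : ℝ := 1 - Real.exp (-(s * 1)) with hQdef
  have hq : q = 1 - 1/α := by
    rw [hqdef, hsθ, Real.exp_neg, Real.exp_log hαpos, one_div]
  have hqα : q * α = α - 1 := by rw [hq]; field_simp
  have hq0 : 0 ≤ q := by
    have h1α : 1/α ≤ 1 := by rw [div_le_one hαpos]; linarith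
    rw [hq]; linarith
  have hQq : q ≤ Q := by
    have : s * θ ≤ s * 1 := by nlinarith
    have := Real.exp_le_exp.2 (neg_le_neg this)
    rw [hqdef, hQdef]; linarith
  have hQ0 : 0 ≤ Q := le_trans hq0 hQq
  have hQqθ : Q ≤ q / θ := by
    have h := chord_aux (s := s) (θ := (1:ℝ)) (A := θ) one_pos hθ0.le hθ1
    rw [div_one] at h
    rw [le_div_iff₀ hθ0]
    calc Q * θ = θ * (1 - Real.exp (-(s * 1))) := by ring
    _ ≤ 1 - Real.exp (-(s * θ)) := h
    _ = q := rfl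
  have hqθs : q / θ ≤ s := by
    rw [div_le_iff₀ hθ0]
    have := Real.add_one_le_exp (-(s * θ))
    have : 1 - Real.exp (-(s*θ)) ≤ s * θ := by linarith
    linarith [this]
  -- per-coordinate quantities
  set c : Fin n → ℝ := fun j => ((⌊α * x j⌋₊ : ℕ) : ℝ) with hcdef
  set p : Fin n → ℝ := fun j => α * x j - c j with hpdef
  have hp0 : ∀ j, 0 ≤ p j := fun j =>
    sub_nonneg.2 (Nat.floor_le (mul_nonneg hαpos.le (hx j)))
  have hc0 : ∀ j, 0 ≤ c j := fun j => Nat.cast_nonneg _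
  have ha0 : ∀ j, 0 ≤ A i j := fun j => (hA i j).1
  have ha1 : ∀ j, A i j ≤ 1 := fun j => (hA i j).2
  -- the random variables
  set X : Fin n → Ω → ℝ := fun j ω => A i j * ((⌊α * x j⌋₊ + Y j ω : ℕ) : ℝ) with hXdef
  have hXmeas : ∀ j, Measurable (X j) := by
    intro j
    exact (measurable_from_top (f := fun k : ℕ => A i j * ((⌊α * x j⌋₊ + k : ℕ) : ℝ))).comp (hYm j)
  have hXindep : iIndepFun X P :=
    hYi.comp (fun j k => A i j * ((⌊α * x j⌋₊ + k : ℕ) : ℝ)) (fun j => measurable_from_top)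
  -- mgf of each coordinate
  set e0 : Fin n → ℝ := fun j => Real.exp (t * (A i j * c j)) with he0def
  have hsetm : ∀ j, MeasurableSet {ω | Y j ω = 1} := fun j => hYm j (measurableSet_singleton 1)
  have hrep : ∀ j, (fun ω => Real.exp (t * X j ω)) =
      fun ω => e0 j + ({ω | Y j ω = 1}).indicator
        (fun _ => e0 j * (Real.exp (t * A i j) - 1)) ω := by
    intro j
    funext ω
    by_cases hY : Y j ω = 1
    · rw [Set.indicator_of_mem (show ω ∈ {ω | Y j ω = 1} from hY)]
      have hXω : X j ω = A i j * (c j + 1) := by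
        simp only [hXdef, hY, hcdef]; push_cast; ring
      rw [hXω, show t * (A i j * (c j + 1)) = t * (A i j * c j) + t * A i j by ring,
        Real.exp_add, he0def]
      ring
    · have hY0 : Y j ω = 0 := by have := hY1 j ω; omega
      rw [Set.indicator_of_notMem (show ω ∉ {ω | Y j ω = 1} from hY)]
      have hXω : X j ω = A i j * c j := by
        simp only [hXdef, hY0, hcdef]; push_cast; ring
      rw [hXω, he0def]
      simp
  have hint : ∀ j, Integrable (fun ω => Real.exp (t * X j ω)) P := by
    intro j
    rw [hrep j]
    exact (integrable_const _).add ((integrable_const _).indicator (hsetm j))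
  have hptoReal : ∀ j, (P {ω | Y j ω = 1}).toReal = p j := by
    intro j
    rw [hYp j, ENNReal.toReal_ofReal (hp0 j)]
  have hmgf_j : ∀ j, mgf (X j) P t = e0 j * (1 + p j * (Real.exp (t * A i j) - 1)) := by
    intro j
    rw [mgf]
    rw [hrep j]
    rw [integral_add (integrable_const _) ((integrable_const _).indicator (hsetm j))]
    rw [integral_const, integral_indicator_const _ (hsetm j), measureReal_def, measureReal_def, hptoReal j]
    simp only [measure_univ, ENNReal.toReal_one, smul_eq_mul, one_smul]
    ring
  have hMj_le : ∀ j, mgf (X j) P t ≤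
      Real.exp (t * (A i j * c j) + p j * (Real.exp (t * A i j) - 1)) := by
    intro j
    rw [hmgf_j j, Real.exp_add, he0def]
    have h1 : 1 + p j * (Real.exp (t * A i j) - 1) ≤
        Real.exp (p j * (Real.exp (t * A i j) - 1)) := by
      have := Real.add_one_le_exp (p j * (Real.exp (t * A i j) - 1))
      linarith
    exact mul_le_mul_of_nonneg_left h1 (Real.exp_pos _).le
  -- the per-coordinate exponent bound
  have hterm : ∀ j, t * (A i j * c j) + p j * (Real.exp (t * A i j) - 1) ≤
      -s * (A i j * c j) - Q * (A i j * p j)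
        - (q/θ - Q) * (if A i j ≤ θ then A i j * p j else 0) := by
    intro j
    have hta : t * A i j = -(s * A i j) := by rw [htdef]; ring
    by_cases hlight : A i j ≤ θ
    · rw [if_pos hlight]
      have h := chord_aux (s := s) hθ0 (ha0 j) hlight
      -- (A/θ)(1 - exp(-(sθ))) ≤ 1 - exp(-(sA))
      have hkey : Q * A i j + (q/θ - Q) * A i j ≤ 1 - Real.exp (t * A i j) := by
        rw [hta]
        have : Q * A i j + (q/θ - Q) * A i j = (A i j / θ) * q := by field_simp; ring
        rw [this]
        exact h
      have hmul := mul_le_mul_of_nonneg_left hkey (hp0 j)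
      have ht' : t * (A i j * c j) = -s * (A i j * c j) := by rw [htdef]
      clear_value t s q Q c p
      linarith [hmul, ht']
    · rw [if_neg hlight]
      have h := chord_aux (s := s) (θ := (1:ℝ)) one_pos (ha0 j) (ha1 j)
      rw [div_one] at h
      have hkey : Q * A i j ≤ 1 - Real.exp (t * A i j) := by
        rw [hta]
        calc Q * A i j = A i j * (1 - Real.exp (-(s * 1))) := by ring
        _ ≤ 1 - Real.exp (-(s * A i j)) := h
      have hmul := mul_le_mul_of_nonneg_left hkey (hp0 j)
      have ht' : t * (A i j * c j) = -s * (A i j * c j) := by rw [htdef]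
      clear_value t s q Q c p
      linarith [hmul, ht']
  -- aggregate sums
  set W : ℝ := ∑ j, A i j * x j with hWdef
  set WL : ℝ := ∑ j ∈ Finset.univ.filter (fun j => A i j ≤ θ), A i j * x j with hWLdef
  set D : ℝ := ∑ j, A i j * c j with hDdef
  set DL : ℝ := ∑ j ∈ Finset.univ.filter (fun j => A i j ≤ θ), A i j * c j with hDLdef
  set R : ℝ := ∑ j, A i j * p j with hRdef
  set RL : ℝ := ∑ j, (if A i j ≤ θ then A i j * p j else 0) with hRLdef
  have hRL_filter : RL = ∑ j ∈ Finset.univ.filter (fun j => A i j ≤ θ), A i j * p j := by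
    rw [hRLdef, Finset.sum_filter]
  have hR_id : R = α * W - D := by
    rw [hRdef, hWdef, hDdef, Finset.mul_sum, ← Finset.sum_sub_distrib]
    exact Finset.sum_congr rfl (fun j _ => by rw [hpdef]; ring)
  have hRL_id : RL = α * WL - DL := by
    rw [hRL_filter, hWLdef, hDLdef, Finset.mul_sum, ← Finset.sum_sub_distrib]
    exact Finset.sum_congr rfl (fun j _ => by rw [hpdef]; ring)
  have hD0 : 0 ≤ D := Finset.sum_nonneg (fun j _ => mul_nonneg (ha0 j) (hc0 j))
  have hDL_D : DL ≤ D := Finset.sum_le_sum_of_subset_of_nonneg (Finset.filter_subset _ _)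
    (fun j _ _ => mul_nonneg (ha0 j) (hc0 j))
  -- exponent bound
  set E : ℝ := ∑ j, (t * (A i j * c j) + p j * (Real.exp (t * A i j) - 1)) with hEdef
  have hE_le : E ≤ -s * D - Q * R - (q/θ - Q) * RL := by
    have hsum : ∑ j, (-s * (A i j * c j) - Q * (A i j * p j)
        - (q/θ - Q) * (if A i j ≤ θ then A i j * p j else 0))
        = -s * D - Q * R - (q/θ - Q) * RL := by
      rw [hDdef, hRdef, hRLdef, Finset.mul_sum, Finset.mul_sum, Finset.mul_sum,
        ← Finset.sum_sub_distrib, ← Finset.sum_sub_distrib]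
    rw [hEdef, ← hsum]
    exact Finset.sum_le_sum (fun j _ => hterm j)
  -- analytic bound on the exponent
  have hW1 : 1 ≤ W := hAx i
  have hWL12 : 1/2 ≤ WL := hLt
  have hcoef : 0 ≤ q/θ - Q := by linarith
  have h1 : -s * D - Q * R - (q/θ - Q) * RL ≤ -(Q*α) - (q/θ - Q)*(α/2) := by
    rw [hR_id, hRL_id]
    have hp1 : 0 ≤ Q * (α * (W - 1)) :=
      mul_nonneg hQ0 (mul_nonneg hαpos.le (by linarith))
    have hp2 : 0 ≤ (q/θ - Q) * (α * (WL - 1/2)) :=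
      mul_nonneg hcoef (mul_nonneg hαpos.le (by linarith))
    have hp3 : 0 ≤ (q/θ - Q) * (D - DL) := mul_nonneg hcoef (by linarith)
    have hp4 : 0 ≤ (s - q/θ) * D := mul_nonneg (by linarith) hD0
    clear_value t s q Q W WL D DL
    linarith [hp1, hp2, hp3, hp4]
  have h2 : s - Q*α - (q/θ - Q)*(α/2) ≤ Real.log θ - L := by
    -- reduce using Q ≥ q and q*α = α - 1
    have hstep : (α - 1)/2 + (α-1)/θ/2 ≤ Q*α + (q/θ - Q)*(α/2) := by
      have hQqα : q * α ≤ Q * α := mul_le_mul_of_nonneg_right hQq hαpos.le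
      have hqθα : (q/θ) * α = (α - 1)/θ := by
        rw [div_mul_eq_mul_div, hqα]
      clear_value t s q Q
      linarith [hQqα, hqθα, hqα]
    have hT1 : 1 ≤ 1/θ := by rw [le_div_iff₀ hθ0]; linarith
    have hlogT : Real.log (1/θ) ≤ 1/θ - 1 := Real.log_le_sub_one_of_pos (by positivity)
    have hlogθ : Real.log θ = -Real.log (1/θ) := by
      rw [one_div, Real.log_inv]; ring
    set T : ℝ := 1/θ with hTdef
    have hsT : s = Real.log α * T := by rw [hsdef, hTdef]; ring
    have haux : 0 ≤ (T - 1) * ((α-1)/2 - Real.log α - 1) := by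
      apply mul_nonneg (by linarith)
      linarith [hlogα_le]
    have hmain : Real.log α * T + (T - 1) + L ≤ (α-1)/2 + (α-1)*T/2 := by
      clear_value T L
      linarith [haux, hlogα_le]
    have hTθ : (α-1)/θ/2 = (α-1)*T/2 := by rw [hTdef]; ring
    rw [hlogθ, hsT]
    clear_value t s q Q T L
    linarith [hstep, hmain, hlogT, hTθ]
  -- assemble the Chernoff bound
  have hmgfS : mgf (∑ j, X j) P t = ∏ j, mgf (X j) P t := hXindep.mgf_sum hXmeas Finset.univ
  have hintS : Integrable (fun ω => Real.exp (t * (∑ j, X j) ω)) P :=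
    hXindep.integrable_exp_mul_sum hXmeas (fun j _ => hint j)
  have hchernoff := measure_le_le_exp_mul_mgf (X := ∑ j, X j) (μ := P) 1 ht0 hintS
  have hprod_le : ∏ j, mgf (X j) P t ≤ Real.exp E := by
    rw [hEdef, Real.exp_sum]
    exact Finset.prod_le_prod (fun j _ => mgf_nonneg) (fun j _ => hMj_le j)
  have hfinal : Real.exp (-t * 1) * mgf (∑ j, X j) P t ≤ 1 * θ / Δ₁ := by
    have h3 : Real.exp (-t * 1) * mgf (∑ j, X j) P t ≤ Real.exp s * Real.exp E := by
      rw [hmgfS]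
      have : -t * 1 = s := by rw [htdef]; ring
      rw [this]
      exact mul_le_mul_of_nonneg_left hprod_le (Real.exp_pos _).le
    have h4 : Real.exp s * Real.exp E = Real.exp (s + E) := (Real.exp_add _ _).symm
    have h5 : s + E ≤ Real.log θ - L := by
      have := hE_le
      linarith [h1, h2]
    have h6 : Real.exp (s + E) ≤ θ / Δ₁ := by
      have : Real.log θ - L = Real.log (θ / Δ₁) := by
        rw [Real.log_div hθ0.ne' hΔpos.ne']
      rw [← Real.exp_log (show (0:ℝ) < θ / Δ₁ by positivity)]
      apply Real.exp_le_exp.2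
      rw [← this]
      exact h5
    calc Real.exp (-t * 1) * mgf (∑ j, X j) P t ≤ Real.exp (s + E) := by rw [← h4]; exact h3
    _ ≤ θ / Δ₁ := h6
    _ = 1 * θ / Δ₁ := by ring
  -- event manipulation
  have hev : ∀ ω, ∑ j, A i j * ((z ω j : ℕ) : ℝ) = (∑ j, X j) ω := by
    intro ω
    rw [Finset.sum_apply]
    exact Finset.sum_congr rfl (fun j _ => by rw [hz ω j])
  calc P {ω | ∑ j, A i j * ((z ω j : ℕ) : ℝ) < 1}
      = P {ω | (∑ j, X j) ω < 1} := by
        congr 1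
        ext ω
        simp only [Set.mem_setOf_eq, hev ω]
    _ ≤ P {ω | (∑ j, X j) ω ≤ 1} := measure_mono (fun ω h => by simp only [Set.mem_setOf_eq] at h ⊢; exact le_of_lt h)
    _ = ENNReal.ofReal ((P {ω | (∑ j, X j) ω ≤ 1}).toReal) :=
        (ENNReal.ofReal_toReal (measure_ne_top P _)).symm
    _ ≤ ENNReal.ofReal (Real.exp (-t * 1) * mgf (∑ j, X j) P t) :=
        ENNReal.ofReal_le_ofReal hchernoff
    _ ≤ ENNReal.ofReal (1 * θ / Δ₁) := ENNReal.ofReal_le_ofReal hfinal
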